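/- arXiv:1908.08428 — 2 statements merged into one kernel-verified Lean document; each statement's English description precedes it below -/
import Mathlib

section
/- Let f : U → ℝ be smooth, and let N = (−f_x, −f_y, 1)/√(1+f_x²+f_y²) be the unit normal to the graph of f. For any unit vector m = (m₁, m₂, m₃) ∈ ℝ³ and the so(3)-valued 1-form A = κ((T₁ + f_x T₃)dx + (T₂ + f_y T₃)dy), the squared norm |A(m)|² computed with the inverse induced metric equals κ²(1 + (m·N)²). -/
/-- The Levi-Civita symbol on three indices. -/
noncomputable def eps (i j k : Fin 3) : ℝ :=
  ((((j : ℤ) - (i : ℤ)) * (((k : ℤ) - (i : ℤ))) * (((k : ℤ) - (j : ℤ)))) / 2 : ℤ)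

/-- The standard basis of so(3): `(T A)_{ab} = ε_{Aab}`. -/
noncomputable def T (A : Fin 3) : Matrix (Fin 3) (Fin 3) ℝ :=
  Matrix.of fun a b => eps A a b

lemma hT0 : T 0 = !![0,0,0;0,0,1;0,-1,0] := by
  ext i j; fin_cases i <;> fin_cases j <;> norm_num [T, eps]

lemma hT1 : T 1 = !![0,0,-1;0,0,0;1,0,0] := by
  ext i j; fin_cases i <;> fin_cases j <;> norm_num [T, eps]

lemma hT2 : T 2 = !![0,1,0;-1,0,0;0,0,0] := by
  ext i j; fin_cases i <;> fin_cases j <;> norm_num [T, eps]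

/-- for the so(3)-valued 1-form
`A = κ((T₁ + f_x T₃)dx + (T₂ + f_y T₃)dy)` on the graph of `f`, a unit vector `m`,
and the unit normal `N = (−f_x, −f_y, 1)/√(1+f_x²+f_y²)`, the squared norm of
`A(m)` computed with the inverse induced metric equals `κ²(1 + (m·N)²)`. -/
theorem A_m_squared_norm (κ fx fy : ℝ) (m : Fin 3 → ℝ)
    (hm : ∑ a : Fin 3, m a ^ 2 = 1) :
    let N : Fin 3 → ℝ := fun a => ![-fx, -fy, 1] a / Real.sqrt (1 + fx ^ 2 + fy ^ 2)
    let ginv : Matrix (Fin 2) (Fin 2) ℝ :=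
      (1 / (1 + fx ^ 2 + fy ^ 2)) •
        !![1 + fy ^ 2, -(fx * fy); -(fx * fy), 1 + fx ^ 2]
    let Am : Fin 2 → Fin 3 → ℝ :=
      ![(κ • (T 0 + fx • T 2)).mulVec m, (κ • (T 1 + fy • T 2)).mulVec m]
    ∑ i : Fin 2, ∑ j : Fin 2, ginv i j * (∑ a : Fin 3, Am i a * Am j a) =
      κ ^ 2 * (1 + (∑ a : Fin 3, m a * N a) ^ 2) := by
  intro N ginv Am
  have hw : (0:ℝ) < 1 + fx ^ 2 + fy ^ 2 := by positivity
  obtain ⟨s, hs, hspos⟩ : ∃ s : ℝ, s ^ 2 = 1 + fx ^ 2 + fy ^ 2 ∧ 0 < s ∧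
      Real.sqrt (1 + fx ^ 2 + fy ^ 2) = s :=
    ⟨Real.sqrt (1 + fx ^ 2 + fy ^ 2), Real.sq_sqrt hw.le, Real.sqrt_pos.2 hw, rfl⟩
  obtain ⟨hspos, hseq⟩ := hspos
  have hsne : s ≠ 0 := hspos.ne'
  have hN : (∑ a : Fin 3, m a * N a) ^ 2 =
      (fx * m 0 + fy * m 1 - m 2) ^ 2 / (1 + fx ^ 2 + fy ^ 2) := by
    simp only [N, Fin.sum_univ_three, Matrix.cons_val_zero, Matrix.cons_val_one,
      Matrix.head_cons, Matrix.cons_val_two, Matrix.tail_cons, hseq]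
    rw [eq_div_iff hw.ne', ← hs]
    field_simp
    ring
  have hAm0 : ∀ a, Am 0 a = ![κ * (fx * m 1), κ * (m 2 - fx * m 0), κ * (-m 1)] a := by
    intro a
    show ((κ • (T 0 + fx • T 2)).mulVec m) a = _
    rw [hT0, hT2]
    fin_cases a <;>
      simp [Matrix.mulVec, dotProduct, Fin.sum_univ_three] <;> ring
  have hAm1 : ∀ a, Am 1 a = ![κ * (fy * m 1 - m 2), κ * (-(fy * m 0)), κ * (m 0)] a := by
    intro a
    show ((κ • (T 1 + fy • T 2)).mulVec m) a = _
    rw [hT1, hT2]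
    fin_cases a <;>
      simp [Matrix.mulVec, dotProduct, Fin.sum_univ_three] <;> ring
  rw [hN]
  simp only [Fin.sum_univ_three, Fin.sum_univ_two] at hm ⊢
  simp only [hAm0, hAm1, ginv, Matrix.smul_apply, Matrix.cons_val_zero, Matrix.cons_val_one,
    Matrix.head_cons, Matrix.cons_val_two, Matrix.tail_cons, Matrix.cons_val',
    Matrix.of_apply, Matrix.empty_val', Matrix.cons_val_fin_one, Matrix.head_fin_const,
    smul_eq_mul]
  field_simp
  linear_combination (κ ^ 2 * (1 + fx ^ 2 + fy ^ 2) ^ 1) * hm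
end

section
/- On the cylinder of radius R, the axially symmetric ansatz v = h(t)e^{iθ} reduces the Bogomolny equation ∂_t v + (i/R)∂_θ v = i e^{−iθ}(v − e^{iθ})² to the ODE h'(t) = h(t)/R + i(h(t) − 1)², and the function h_c(t) = (i√(1−4iR)/(2R)) tanh((1/2)√(1−4iR)(c + t/R)) + i/(2R) + 1 solves this ODE for every complex constant c. -/
open Complex

lemma cylinder_kink_aux (R : ℝ) (hR0 : (R : ℂ) ≠ 0) (s u : ℂ)
    (hs : s ^ 2 = 1 - 4 * I * R) (hc : Complex.cosh u ≠ 0) :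
    (I * s / (2 * R) * Complex.tanh u + I / (2 * R) + 1) / R +
      I * (I * s / (2 * R) * Complex.tanh u + I / (2 * R) + 1 - 1) ^ 2 =
      I * s / (2 * R) * (s / (2 * R) / Complex.cosh u ^ 2) := by
  have hid : Complex.cosh u ^ 2 - Complex.sinh u ^ 2 = 1 := Complex.cosh_sq_sub_sinh_sq u
  rw [Complex.tanh_eq_sinh_div_cosh]
  field_simp
  have hRi : ((R : ℂ)) ^ 3 * ((R : ℂ)⁻¹) ^ 3 = 1 := by
    rw [← mul_pow, mul_inv_cancel₀ hR0, one_pow]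
  have hci : Complex.cosh u * (Complex.cosh u)⁻¹ = 1 := mul_inv_cancel₀ hc
  linear_combination (I * (s * Complex.sinh u + Complex.cosh u) ^ 2 + 4 * R * Complex.cosh u ^ 2) * Complex.I_sq +
    I * s ^ 2 * hid - I * Complex.cosh u ^ 2 * hs

/-- on the cylinder of radius `R`, the axially symmetric ansatz
`v = h(t)e^{iθ}` reduces the Bogomolny equation
`∂_t v + (i/R)∂_θ v = i e^{−iθ}(v − e^{iθ})²` to the ODE
`h' = h/R + i(h−1)²`, and `h_c(t) = (i√(1−4iR)/(2R)) tanh((1/2)√(1−4iR)(c+t/R)) + i/(2R) + 1`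
solves this ODE (away from the poles of `tanh`) for every complex constant `c`. -/
theorem cylinder_kink (R : ℝ) (hR : 0 < R) (s : ℂ) (hs : s ^ 2 = 1 - 4 * I * R) :
    (∀ h₀ : ℝ → ℂ,
      ((∀ t θ : ℝ,
          deriv h₀ t * Complex.exp (I * θ) +
            (I / R) * deriv (fun θ' : ℝ => h₀ t * Complex.exp (I * θ')) θ =
          I * Complex.exp (-I * θ) *
            (h₀ t * Complex.exp (I * θ) - Complex.exp (I * θ)) ^ 2) ↔
        (∀ t : ℝ, deriv h₀ t = h₀ t / R + I * (h₀ t - 1) ^ 2))) ∧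
    (∀ (c : ℂ),
      let h : ℝ → ℂ := fun t =>
        I * s / (2 * R) * Complex.tanh ((1 / 2) * s * (c + t / R)) + I / (2 * R) + 1
      ∀ t : ℝ, Complex.cosh ((1 / 2) * s * (c + t / R)) ≠ 0 →
        HasDerivAt h (h t / R + I * (h t - 1) ^ 2) t) := by
  have hR0 : (R : ℂ) ≠ 0 := by exact_mod_cast hR.ne'
  have hI : I * I = -1 := I_mul_I
  constructor
  · intro h₀
    have hderiv : ∀ (t θ : ℝ),
        deriv (fun θ' : ℝ => h₀ t * Complex.exp (I * θ')) θ
          = h₀ t * (Complex.exp (I * θ) * I) := by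
      intro t θ
      have : HasDerivAt (fun θ' : ℝ => h₀ t * Complex.exp (I * θ'))
          (h₀ t * (Complex.exp (I * θ) * I)) θ := by
        have h1 : HasDerivAt (fun z : ℂ => h₀ t * Complex.exp (I * z))
            (h₀ t * (Complex.exp (I * θ) * I)) (θ : ℂ) := by
          simpa [mul_comm] using (((hasDerivAt_id (θ : ℂ)).const_mul I).cexp.const_mul (h₀ t))
        exact h1.comp_ofReal
      exact this.deriv
    constructor
    · intro H t
      have := H t 0
      rw [hderiv] at this
      simp only [ofReal_zero, mul_zero, Complex.exp_zero, mul_one, neg_mul, neg_zero] at this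
      field_simp at this ⊢
      linear_combination this - h₀ t * Complex.I_sq
    · intro H t θ
      rw [hderiv, H t]
      have he : Complex.exp (I * θ) ≠ 0 := Complex.exp_ne_zero _
      rw [neg_mul, Complex.exp_neg]
      field_simp
      linear_combination (h₀ t) * Complex.I_sq
  · intro c h t hc
    set u : ℂ := (1 / 2) * s * (c + t / R) with hu
    have h1 : HasDerivAt (fun z : ℂ => (1 / 2) * s * (c + z / R)) (s / (2 * R)) (t : ℂ) := by
      have := (((hasDerivAt_id (t : ℂ)).div_const (R : ℂ)).const_add c).const_mul
        ((1 / 2) * s)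
      exact this.congr_deriv (by ring)
    have hsinh : HasDerivAt (fun t' : ℝ => Complex.sinh ((1 / 2) * s * (c + t' / R)))
        (Complex.cosh u * (s / (2 * R))) t := h1.csinh.comp_ofReal
    have hcosh : HasDerivAt (fun t' : ℝ => Complex.cosh ((1 / 2) * s * (c + t' / R)))
        (Complex.sinh u * (s / (2 * R))) t := h1.ccosh.comp_ofReal
    have htanh : HasDerivAt (fun t' : ℝ => Complex.tanh ((1 / 2) * s * (c + t' / R)))
        (s / (2 * R) / Complex.cosh u ^ 2) t := by
      have hdiv := hsinh.div hcosh hc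
      have : (Complex.cosh u * (s / (2 * R)) * Complex.cosh u -
          Complex.sinh u * (Complex.sinh u * (s / (2 * R)))) / Complex.cosh u ^ 2
          = s / (2 * R) / Complex.cosh u ^ 2 := by
        have hid : Complex.cosh u ^ 2 - Complex.sinh u ^ 2 = 1 := Complex.cosh_sq_sub_sinh_sq u
        field_simp
        linear_combination s * hid
      rw [this] at hdiv
      simpa only [Complex.tanh_eq_sinh_div_cosh, Pi.div_def] using hdiv
    have hder : HasDerivAt
        (fun t' : ℝ => I * s / (2 * R) * Complex.tanh ((1 / 2) * s * (c + t' / R)) +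
          I / (2 * R) + 1)
        (I * s / (2 * R) * (s / (2 * R) / Complex.cosh u ^ 2)) t :=
      ((htanh.const_mul (I * s / (2 * R))).add_const (I / (2 * R))).add_const 1
    have hid : Complex.cosh u ^ 2 - Complex.sinh u ^ 2 = 1 := Complex.cosh_sq_sub_sinh_sq u
    have key := cylinder_kink_aux R hR0 s u hs hc
    show HasDerivAt h ((I * s / (2 * R) * Complex.tanh u + I / (2 * R) + 1) / R +
        I * (I * s / (2 * R) * Complex.tanh u + I / (2 * R) + 1 - 1) ^ 2) t
    rw [key]
    exact hder
end
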